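/- Let Z be an integrable real-valued random variable on a probability space (Ω, 𝓕, P), let β ∈ (0,1), and assume the cumulative distribution function α ↦ P(Z ≤ α) is continuous. Let v := VaR_β(Z) := inf{α ∈ ℝ : P(Z ≤ α) ≥ β} and CVaR_β(Z) := inf_{α ∈ ℝ} (α + (1-β)⁻¹·E[max(Z-α, 0)]). Then P(Z ≥ v) = 1 - β and CVaR_β(Z) = E[Z · 𝟙(Z ≥ v)] / (1 - β), i.e., CVaR_β(Z) equals the conditional expectation E[Z | Z ≥ VaR_β(Z)]. -/

import Mathlib

open MeasureTheory Filter

/-- When the cumulative distribution function of `Z` is continuous, the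
conditional value-at-risk equals the conditional expectation of `Z` above the
value-at-risk: `P(Z ≥ VaR_β(Z)) = 1 - β` and
`CVaR_β(Z) = E[Z · 𝟙(Z ≥ VaR_β(Z))] / (1 - β)`. -/
theorem cvar_eq_conditional_expectation
    {Ω : Type*} [MeasurableSpace Ω] (P : Measure Ω) [IsProbabilityMeasure P]
    (Z : Ω → ℝ) (hZmeas : Measurable Z) (hZint : Integrable Z P)
    (β : ℝ) (hβ : β ∈ Set.Ioo (0 : ℝ) 1)
    (hcont : Continuous fun α : ℝ => (P {ω | Z ω ≤ α}).toReal)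
    (v : ℝ) (hv : v = sInf {α : ℝ | β ≤ (P {ω | Z ω ≤ α}).toReal})
    (CVaR : ℝ)
    (hCVaR : CVaR = ⨅ α : ℝ, (α + (1 - β)⁻¹ * ∫ ω, max (Z ω - α) 0 ∂P)) :
    (P {ω | v ≤ Z ω}).toReal = 1 - β ∧
      CVaR = (∫ ω in {ω | v ≤ Z ω}, Z ω ∂P) / (1 - β) := by
  have hpart1 : (P {ω | v ≤ Z ω}).toReal = 1 - β := by
    obtain ⟨hβ0, hβ1⟩ := hβ
    set F : ℝ → ℝ := fun α => (P {ω | Z ω ≤ α}).toReal with hFdef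
    have hmap : ∀ α : ℝ, P {ω | Z ω ≤ α} = (P.map Z) (Set.Iic α) := fun α => by
      rw [Measure.map_apply hZmeas measurableSet_Iic]; rfl
    have hprob : IsProbabilityMeasure (P.map Z) := Measure.isProbabilityMeasure_map hZmeas.aemeasurable
    have hFcdf : ∀ α, F α = ProbabilityTheory.cdf (P.map Z) α := fun α => by
      rw [ProbabilityTheory.cdf_eq_real, hFdef]; simp only [hmap, Measure.real]
    have hF_mono : Monotone F := fun a b hab => by
      simp only [hFcdf]; exact ProbabilityTheory.monotone_cdf _ hab
    set S : Set ℝ := {α : ℝ | β ≤ F α} with hSdef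
    have hS_closed : IsClosed S := isClosed_le continuous_const hcont
    have hS_ne : S.Nonempty := by
      have h1 : Tendsto F atTop (nhds 1) := by
        simp only [funext hFcdf]; exact ProbabilityTheory.tendsto_cdf_atTop _
      have := (h1.eventually (eventually_ge_nhds hβ1)).exists
      obtain ⟨α, hα⟩ := this
      exact ⟨α, hα⟩
    have hS_bdd : BddBelow S := by
      have h0 : Tendsto F atBot (nhds 0) := by
        have := ProbabilityTheory.tendsto_cdf_atBot (μ := P.map Z)
        simpa only [funext hFcdf] using this
      obtain ⟨α0, hα0⟩ := (h0.eventually (eventually_lt_nhds hβ0)).exists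
      refine ⟨α0, fun s hs => ?_⟩
      by_contra hlt
      exact absurd (le_trans hs (hF_mono (le_of_lt (not_le.mp hlt)))) (not_le.mpr hα0)
    have hvS : v ∈ S := hv ▸ hS_closed.csInf_mem hS_ne hS_bdd
    have hFv_le : F v ≤ β := by
      by_contra hgt
      have hev : ∀ᶠ α in nhds v, β < F α :=
        (hcont.continuousAt (x := v)).eventually (eventually_gt_nhds (not_le.mp hgt))
      have hev' : ∀ᶠ α in nhdsWithin v (Set.Iio v), β < F α := hev.filter_mono nhdsWithin_le_nhds
      obtain ⟨α, hαβ, hαmem⟩ :=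
        (hev'.and (self_mem_nhdsWithin : ∀ᶠ α in nhdsWithin v (Set.Iio v), α ∈ Set.Iio v)).exists
      have : v ≤ α := hv ▸ csInf_le hS_bdd (le_of_lt hαβ)
      exact absurd hαmem (not_lt.mpr this)
    have hFv : F v = β := le_antisymm hFv_le hvS
    -- P {Z < v} = β
    have hlt_le : (P {ω | Z ω < v}).toReal ≤ β := by
      rw [← hFv]
      exact ENNReal.toReal_mono (measure_ne_top _ _) (measure_mono (Set.setOf_subset_setOf.mpr fun ω => le_of_lt))
    have hlt_ge : β ≤ (P {ω | Z ω < v}).toReal := by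
      have htend : Tendsto (fun n : ℕ => F (v - 1 / (n + 1))) atTop (nhds (F v)) := by
        exact hcont.continuousAt.tendsto.comp (by
          have : Tendsto (fun n : ℕ => (1 : ℝ) / (n + 1)) atTop (nhds 0) :=
            tendsto_one_div_add_atTop_nhds_zero_nat
          simpa using (tendsto_const_nhds (x := v)).sub this)
      rw [← hFv]
      refine le_of_tendsto htend (Eventually.of_forall fun n => ?_)
      refine ENNReal.toReal_mono (measure_ne_top _ _) (measure_mono fun ω h => ?_)
      simp only [Set.mem_setOf_eq] at h ⊢
      have hpos : (0:ℝ) < 1 / (n + 1) := by positivity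
      linarith
    have hlt : (P {ω | Z ω < v}).toReal = β := le_antisymm hlt_le hlt_ge
    have hcompl : {ω | v ≤ Z ω} = {ω | Z ω < v}ᶜ := by
      ext ω; simp [not_lt]
    have hmeaslt : MeasurableSet {ω | Z ω < v} := measurableSet_lt hZmeas measurable_const
    rw [hcompl, measure_compl hmeaslt (measure_ne_top _ _), measure_univ,
      ENNReal.toReal_sub_of_le prob_le_one ENNReal.one_ne_top, ENNReal.toReal_one, hlt]
  refine ⟨hpart1, ?_⟩
  obtain ⟨hβ0, hβ1⟩ := hβ
  have h1β : (0:ℝ) < 1 - β := by linarith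
  set c : ℝ := (1 - β)⁻¹ with hc
  have hc1 : c * (1 - β) = 1 := inv_mul_cancel₀ h1β.ne'
  set A : Set Ω := {ω | v ≤ Z ω} with hA
  have hAmeas : MeasurableSet A := measurableSet_le measurable_const hZmeas
  have hint : ∀ α : ℝ, Integrable (fun ω => max (Z ω - α) 0) P :=
    fun α => (hZint.sub (integrable_const α)).pos_part
  -- key inequality
  have hkey : ∀ α : ℝ, (v - α) * (1 - β) ≤
      (∫ ω, max (Z ω - α) 0 ∂P) - ∫ ω, max (Z ω - v) 0 ∂P := by
    intro α
    have hmono : ∫ ω, A.indicator (fun _ => v - α) ω ∂P ≤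
        ∫ ω, (max (Z ω - α) 0 - max (Z ω - v) 0) ∂P := by
      refine integral_mono ((integrable_const (v - α)).indicator hAmeas)
        ((hint α).sub (hint v)) (fun ω => ?_)
      by_cases hω : ω ∈ A
      · rw [Set.indicator_of_mem hω]
        have hZv : v ≤ Z ω := hω
        simp only
        rw [max_eq_left (sub_nonneg.mpr hZv)]
        have := le_max_left (Z ω - α) (0:ℝ)
        linarith
      · rw [Set.indicator_of_notMem hω]
        have hZv : Z ω < v := not_le.mp hω
        simp only
        rw [max_eq_right (by linarith : Z ω - v ≤ 0)]
        have := le_max_right (Z ω - α) (0:ℝ)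
        linarith
    rw [integral_indicator_const _ hAmeas, integral_sub (hint α) (hint v)] at hmono
    calc (v - α) * (1 - β) = (1 - β) * (v - α) := by ring
    _ = (P A).toReal • (v - α) := by rw [hpart1]; rfl
    _ ≤ _ := hmono
  have hgv_le : ∀ α : ℝ, v + c * ∫ ω, max (Z ω - v) 0 ∂P ≤
      α + c * ∫ ω, max (Z ω - α) 0 ∂P := by
    intro α
    have h2 := mul_le_mul_of_nonneg_left (hkey α) (inv_nonneg.mpr h1β.le)
    have h3 : (1 - β)⁻¹ * ((v - α) * (1 - β)) = v - α := by
      field_simp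
    rw [h3] at h2
    have : c * ((∫ ω, max (Z ω - α) 0 ∂P) - ∫ ω, max (Z ω - v) 0 ∂P)
        = c * (∫ ω, max (Z ω - α) 0 ∂P) - c * ∫ ω, max (Z ω - v) 0 ∂P := by ring
    rw [this] at h2
    linarith
  have hCVaReq : CVaR = v + c * ∫ ω, max (Z ω - v) 0 ∂P := by
    rw [hCVaR]
    refine le_antisymm ?_ (le_ciInf hgv_le)
    refine ciInf_le ⟨v + c * ∫ ω, max (Z ω - v) 0 ∂P, ?_⟩ v
    rintro x ⟨α, rfl⟩
    exact hgv_le α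
  -- compute the value at v
  have hIv : (∫ ω, max (Z ω - v) 0 ∂P) = (∫ ω in A, Z ω ∂P) - (1 - β) * v := by
    have heq : (fun ω => max (Z ω - v) 0) = fun ω => A.indicator (fun ω => Z ω - v) ω := by
      funext ω
      by_cases hω : ω ∈ A
      · rw [Set.indicator_of_mem hω, max_eq_left (sub_nonneg.mpr hω)]
      · rw [Set.indicator_of_notMem hω, max_eq_right (by
          have : Z ω < v := not_le.mp hω
          linarith)]
    rw [heq, integral_indicator hAmeas,
      integral_sub hZint.integrableOn (integrableOn_const (measure_ne_top _ _)),
      setIntegral_const, Measure.real, hpart1, smul_eq_mul]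
  rw [hCVaReq, hIv]
  set I := ∫ ω in A, Z ω ∂P
  calc v + c * (I - (1 - β) * v) = v + c * I - c * (1 - β) * v := by ring
  _ = c * I := by rw [hc1]; ring
  _ = I / (1 - β) := by rw [hc, div_eq_mul_inv, mul_comm]
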